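/- arXiv:1505.02564 — 3 statements merged into one kernel-verified Lean document; each statement's English description precedes it below -/
import Mathlib

section
/- For every integer k ≥ 7, the ratio (∫₀^π sin^{2k}θ dθ) / (∫₀^{π/8} sin^{2k}θ dθ) is at most 8^{k+1}. -/
open intervalIntegral Real

/-- `x^n - b^n ≤ n * x^(n-1) * (x - b)` for `0 ≤ b ≤ x`. -/
lemma aux_pow_sub_pow_le (x b : ℝ) (hb : 0 ≤ b) (hbx : b ≤ x) :
    ∀ n : ℕ, x ^ n - b ^ n ≤ (n : ℝ) * x ^ (n - 1) * (x - b) := by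
  intro n
  induction n with
  | zero => simp
  | succ n ih =>
    have hx : 0 ≤ x := hb.trans hbx
    cases n with
    | zero => simp
    | succ p =>
      have hbn : b ^ (p + 1) ≤ x ^ (p + 1) := pow_le_pow_left₀ hb hbx _
      have h1 : x ^ (p + 2) - b ^ (p + 2)
          = x * (x ^ (p + 1) - b ^ (p + 1)) + b ^ (p + 1) * (x - b) := by ring
      have h2 : x * (x ^ (p + 1) - b ^ (p + 1))
          ≤ x * (((p + 1 : ℕ) : ℝ) * x ^ (p + 1 - 1) * (x - b)) :=
        mul_le_mul_of_nonneg_left ih hx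
      have h3 : b ^ (p + 1) * (x - b) ≤ x ^ (p + 1) * (x - b) :=
        mul_le_mul_of_nonneg_right hbn (by linarith)
      have h4 : x * (((p + 1 : ℕ) : ℝ) * x ^ (p + 1 - 1) * (x - b))
          = ((p + 1 : ℝ)) * x ^ (p + 1) * (x - b) := by
        rw [Nat.add_sub_cancel]
        push_cast
        ring
      have h5 : (((p + 2 : ℕ) : ℝ)) * x ^ (p + 2 - 1) * (x - b)
          = ((p + 1 : ℝ)) * x ^ (p + 1) * (x - b) + x ^ (p + 1) * (x - b) := by
        have e : p + 2 - 1 = p + 1 := by omega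
        rw [e]
        push_cast
        ring
      rw [h1, h5]
      linarith

/-- Convexity-style lower bound for even powers: if `0 ≤ a`, `0 ≤ x`, `0 ≤ y` and
`x - y ≤ a`, then `x^(2n+2) - (2n+2) x^(2n+1) y ≤ a^(2n+2)`. -/
lemma aux_even_pow_lower (n : ℕ) (a x y : ℝ) (ha : 0 ≤ a) (hx : 0 ≤ x) (hy : 0 ≤ y)
    (hxy : x - y ≤ a) :
    x ^ (2 * n + 2) - (2 * (n : ℝ) + 2) * x ^ (2 * n + 1) * y ≤ a ^ (2 * n + 2) := by
  rcases le_or_gt x y with h | h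
  · have hxn : 0 ≤ x ^ (2 * n + 1) := pow_nonneg hx _
    have h1 : x ^ (2 * n + 2) = x ^ (2 * n + 1) * x := by ring
    have h2 : x ^ (2 * n + 1) * x ≤ x ^ (2 * n + 1) * y := mul_le_mul_of_nonneg_left h hxn
    have h3 : x ^ (2 * n + 1) * y ≤ (2 * (n : ℝ) + 2) * (x ^ (2 * n + 1) * y) := by
      have : (1 : ℝ) ≤ 2 * (n : ℝ) + 2 := by
        have := Nat.cast_nonneg (α := ℝ) n
        linarith
      nlinarith [mul_nonneg hxn hy]
    have h4 : 0 ≤ a ^ (2 * n + 2) := pow_nonneg ha _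
    nlinarith
  · have hb : 0 ≤ x - y := by linarith
    have h2 : (x - y) ^ (2 * n + 2) ≤ a ^ (2 * n + 2) := pow_le_pow_left₀ hb hxy _
    have h3 := aux_pow_sub_pow_le x (x - y) hb (by linarith) (2 * n + 2)
    have h4 : (2 * n + 2 : ℕ) - 1 = 2 * n + 1 := by omega
    rw [h4] at h3
    have h5 : ((2 * n + 2 : ℕ) : ℝ) * x ^ (2 * n + 1) * (x - (x - y))
        = (2 * (n : ℝ) + 2) * x ^ (2 * n + 1) * y := by push_cast; ring
    rw [h5] at h3
    linarith

/-- The key rational numeric induction. -/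
lemma aux_rat_induction (m : ℕ) (hm : 6 ≤ m) :
    (0.6595 : ℝ) * ((2 * (m : ℝ) + 3) * (2 * (m : ℝ) + 4))
      ≤ 8 * (1.17157286 : ℝ) ^ (m + 1) * 0.41421356 * (2 * (m : ℝ) + 3.82842712) := by
  induction m, hm using Nat.le_induction with
  | base => norm_num
  | succ m hm ih =>
    have hM : (6 : ℝ) ≤ (m : ℝ) := by exact_mod_cast hm
    set M : ℝ := (m : ℝ) with hMdef
    have key : (2 * M + 3.82842712) * ((2 * M + 5) * (2 * M + 6))
        ≤ (1.17157286 : ℝ) * (2 * M + 5.82842712) * ((2 * M + 3) * (2 * M + 4)) := by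
      nlinarith [mul_nonneg (mul_nonneg (sub_nonneg.2 hM) (sub_nonneg.2 hM)) (sub_nonneg.2 hM),
        mul_nonneg (sub_nonneg.2 hM) (sub_nonneg.2 hM), sub_nonneg.2 hM]
    have hpos : (0 : ℝ) < 2 * M + 3.82842712 := by linarith
    have h1 : 0.6595 * ((2 * M + 3) * (2 * M + 4)) * ((1.17157286 : ℝ) * (2 * M + 5.82842712))
        ≤ 8 * (1.17157286 : ℝ) ^ (m + 1) * 0.41421356 * (2 * M + 3.82842712)
            * ((1.17157286 : ℝ) * (2 * M + 5.82842712)) := by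
      apply mul_le_mul_of_nonneg_right ih
      nlinarith
    have h2 : 0.6595 * ((2 * M + 5) * (2 * M + 6)) * (2 * M + 3.82842712)
        ≤ 0.6595 * ((2 * M + 3) * (2 * M + 4)) * ((1.17157286 : ℝ) * (2 * M + 5.82842712)) := by
      nlinarith
    have h3 : 0.6595 * ((2 * M + 5) * (2 * M + 6)) * (2 * M + 3.82842712)
        ≤ (8 * (1.17157286 : ℝ) ^ (m + 2) * 0.41421356 * (2 * M + 5.82842712))
            * (2 * M + 3.82842712) := by
      calc 0.6595 * ((2 * M + 5) * (2 * M + 6)) * (2 * M + 3.82842712)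
          ≤ 8 * (1.17157286 : ℝ) ^ (m + 1) * 0.41421356 * (2 * M + 3.82842712)
              * ((1.17157286 : ℝ) * (2 * M + 5.82842712)) := le_trans h2 h1
        _ = (8 * (1.17157286 : ℝ) ^ (m + 2) * 0.41421356 * (2 * M + 5.82842712))
              * (2 * M + 3.82842712) := by ring
    have h4 := le_of_mul_le_mul_right (by linarith [h3] :
      0.6595 * ((2 * M + 5) * (2 * M + 6)) * (2 * M + 3.82842712)
        ≤ (8 * (1.17157286 : ℝ) ^ (m + 2) * 0.41421356 * (2 * M + 5.82842712))
            * (2 * M + 3.82842712)) hpos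
    push_cast
    calc (0.6595 : ℝ) * ((2 * (M + 1) + 3) * (2 * (M + 1) + 4))
        = 0.6595 * ((2 * M + 5) * (2 * M + 6)) := by ring
      _ ≤ 8 * (1.17157286 : ℝ) ^ (m + 2) * 0.41421356 * (2 * M + 5.82842712) := h4
      _ = 8 * (1.17157286 : ℝ) ^ (m + 1 + 1) * 0.41421356 * (2 * (M + 1) + 3.82842712) := by
          ring


section AuxFacts

open Real

lemma aux_sqrt2_lb : (1.41421356 : ℝ) ≤ Real.sqrt 2 := by
  nlinarith [Real.sq_sqrt (show (0:ℝ) ≤ 2 by norm_num), Real.sqrt_nonneg 2]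

lemma aux_sqrt2_ub : Real.sqrt 2 ≤ 1.41421357 := by
  nlinarith [Real.sq_sqrt (show (0:ℝ) ≤ 2 by norm_num), Real.sqrt_nonneg 2]

lemma aux_sin8_sq : Real.sin (π/8) ^ 2 = (2 - Real.sqrt 2) / 4 := by
  rw [Real.sin_pi_div_eight, div_pow,
    Real.sq_sqrt (by nlinarith [aux_sqrt2_ub] : (0:ℝ) ≤ 2 - Real.sqrt 2)]
  norm_num

lemma aux_cos8_sq : Real.cos (π/8) ^ 2 = (2 + Real.sqrt 2) / 4 := by
  rw [Real.cos_pi_div_eight, div_pow,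
    Real.sq_sqrt (by nlinarith [aux_sqrt2_lb] : (0:ℝ) ≤ 2 + Real.sqrt 2)]
  norm_num

lemma aux_sin8_nonneg : 0 ≤ Real.sin (π/8) := by
  apply Real.sin_nonneg_of_nonneg_of_le_pi
  · positivity
  · nlinarith [Real.pi_pos]

lemma aux_cos8_pos : 0 < Real.cos (π/8) := by
  apply Real.cos_pos_of_mem_Ioo
  constructor <;> nlinarith [Real.pi_pos]

lemma aux_sin8_eq : Real.sin (π/8) = (Real.sqrt 2 - 1) * Real.cos (π/8) := by
  have h2 : Real.sqrt 2 ^ 2 = 2 := Real.sq_sqrt (by norm_num)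
  have hsq : Real.sin (π/8) ^ 2 = ((Real.sqrt 2 - 1) * Real.cos (π/8)) ^ 2 := by
    rw [aux_sin8_sq, mul_pow, aux_cos8_sq]
    linear_combination (-Real.sqrt 2 / 4) * h2
  exact (pow_left_inj₀ aux_sin8_nonneg
    (by nlinarith [aux_sqrt2_lb, aux_cos8_pos]) two_ne_zero).mp hsq

lemma aux_cos8_lb : (0.9238 : ℝ) ≤ Real.cos (π/8) := by
  nlinarith [aux_cos8_sq, aux_sqrt2_lb, aux_cos8_pos]

lemma aux_cos8_ub : Real.cos (π/8) ≤ 1 := Real.cos_le_one _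

lemma aux_sin8_ub : Real.sin (π/8) ≤ 0.3827 := by
  nlinarith [aux_sin8_sq, aux_sqrt2_lb, aux_sin8_nonneg]

lemma aux_sin8_lb : (0.3826 : ℝ) ≤ Real.sin (π/8) := by
  nlinarith [aux_sin8_sq, aux_sqrt2_ub, aux_sin8_nonneg]

lemma aux_x1_nonneg : 0 ≤ Real.sin (π/8) - Real.cos (π/8) * (π/8) := by
  rw [aux_sin8_eq]
  have h1 : π/8 ≤ Real.sqrt 2 - 1 := by nlinarith [aux_sqrt2_lb, Real.pi_lt_d6]
  nlinarith [aux_cos8_pos]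

lemma aux_x1_ub : Real.sin (π/8) - Real.cos (π/8) * (π/8) ≤ 0.02 := by
  nlinarith [aux_sin8_ub, aux_cos8_lb, Real.pi_gt_d6, aux_cos8_ub]

end AuxFacts


section AuxFacts2

open Real

lemma aux_sin8_sq_ub : Real.sin (π/8) ^ 2 ≤ 0.147 := by
  nlinarith [aux_sin8_ub, aux_sin8_nonneg]

/-- main numeric lower bound used for `F (π/8)`. -/
lemma aux_main_lower (m : ℕ) (M : ℝ) (hm : 6 ≤ m) (hM : M = (m:ℝ)) :
    (0.6595 : ℝ) * ((2 * M + 3) * (2 * M + 4))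
      ≤ 8 * (8 ^ (m + 1) * ((2 - Real.sqrt 2) / 4) ^ (m + 1))
          * ((Real.sqrt 2 - 1) * (2 * M + 1 + 2 * Real.sqrt 2)) := by
  have hr2a := aux_sqrt2_lb
  have hr2b := aux_sqrt2_ub
  have hM6 : (6:ℝ) ≤ M := by rw [hM]; exact_mod_cast hm
  have hb1 : (1.17157286 : ℝ) ≤ 8 * ((2 - Real.sqrt 2) / 4) := by nlinarith
  have hb2 : (1.17157286 : ℝ) ^ (m + 1) ≤ 8 ^ (m + 1) * ((2 - Real.sqrt 2) / 4) ^ (m + 1) := by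
    rw [← mul_pow]
    exact pow_le_pow_left₀ (by norm_num) hb1 _
  have hb3 : (0.41421356 : ℝ) ≤ Real.sqrt 2 - 1 := by nlinarith
  have hb4 : (2 * M + 3.82842712 : ℝ) ≤ 2 * M + 1 + 2 * Real.sqrt 2 := by nlinarith
  have hb5 : (0:ℝ) ≤ 0.41421356 * (2 * M + 3.82842712) := by nlinarith
  have hb6 : (0.41421356 : ℝ) * (2 * M + 3.82842712)
      ≤ (Real.sqrt 2 - 1) * (2 * M + 1 + 2 * Real.sqrt 2) := by
    nlinarith [mul_nonneg (sub_nonneg.2 hb3) (sub_nonneg.2 hb4)]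
  have hrat := aux_rat_induction m hm
  rw [← hM] at hrat
  calc (0.6595 : ℝ) * ((2 * M + 3) * (2 * M + 4))
      ≤ 8 * (1.17157286 : ℝ) ^ (m + 1) * 0.41421356 * (2 * M + 3.82842712) := hrat
    _ = (8 * (1.17157286 : ℝ) ^ (m + 1)) * (0.41421356 * (2 * M + 3.82842712)) := by ring
    _ ≤ (8 * (8 ^ (m + 1) * ((2 - Real.sqrt 2) / 4) ^ (m + 1)))
          * ((Real.sqrt 2 - 1) * (2 * M + 1 + 2 * Real.sqrt 2)) := by
        apply mul_le_mul (by linarith) hb6 hb5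
        have hnn : (0:ℝ) ≤ (2 - Real.sqrt 2) / 4 := by nlinarith
        have := pow_nonneg hnn (m + 1)
        positivity
    _ = 8 * (8 ^ (m + 1) * ((2 - Real.sqrt 2) / 4) ^ (m + 1))
          * ((Real.sqrt 2 - 1) * (2 * M + 1 + 2 * Real.sqrt 2)) := by ring

/-- coefficient bound used for `F 0`. -/
lemma aux_coef (M s c : ℝ) (hM : 6 ≤ M) (hs0 : 0 ≤ s) (hs2ub : s ^ 2 ≤ 0.147)
    (hclb : 0.9238 ≤ c) (hcub : c ≤ 1) (hcpos : 0 < c) :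
    (1 / c) * (1 / (2 * M + 3) + ((M + 1) * s / c ^ 2) * (2 * s / (2 * M + 3))) ≤ (1.5 : ℝ) := by
  have hMp : (0:ℝ) < 2 * M + 3 := by linarith
  have hc3p : (0:ℝ) < c ^ 3 * (2 * M + 3) := by positivity
  have e : (1 / c) * (1 / (2 * M + 3) + ((M + 1) * s / c ^ 2) * (2 * s / (2 * M + 3)))
      = (c ^ 2 + 2 * s ^ 2 * (M + 1)) / (c ^ 3 * (2 * M + 3)) := by
    field_simp
  rw [e, div_le_iff₀ hc3p]
  have hcc : (0.8534 : ℝ) ≤ c ^ 2 := by nlinarith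
  have hc3 : (0.788 : ℝ) ≤ c ^ 3 := by nlinarith
  have hm1 : (0:ℝ) ≤ M + 1 := by linarith
  nlinarith [mul_le_mul_of_nonneg_right hs2ub hm1,
    mul_le_mul_of_nonneg_right hc3 (le_of_lt hMp)]

lemma aux_drop (a co t2 t3 t4 : ℝ) (h2 : 0 ≤ co * t2) (h4 : 0 ≤ co * t4) :
    a - co * (t2 - t3 + t4) ≤ a + co * t3 := by nlinarith

end AuxFacts2

set_option maxHeartbeats 2000000 in
/-- For every integer `k ≥ 7`, the ratio
`(∫₀^π sin^{2k} θ dθ) / (∫₀^{π/8} sin^{2k} θ dθ)` is at most `8^{k+1}`. -/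
theorem sin_integral_ratio_le (k : ℕ) (hk : 7 ≤ k) :
    (∫ θ in (0:ℝ)..Real.pi, Real.sin θ ^ (2 * k)) /
      (∫ θ in (0:ℝ)..(Real.pi / 8), Real.sin θ ^ (2 * k)) ≤ 8 ^ (k + 1) := by
  obtain ⟨m, rfl⟩ : ∃ m, k = m + 1 := ⟨k - 1, by omega⟩
  have hm : 6 ≤ m := by omega
  have hM : (6 : ℝ) ≤ (m : ℝ) := by exact_mod_cast hm
  set M : ℝ := (m : ℝ) with hMdef
  clear_value M
  have pi_pos := Real.pi_pos
  have pi_ub : π < 3.141593 := Real.pi_lt_d6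
  -- basic sqrt 2 facts
  have h2 : Real.sqrt 2 ^ 2 = 2 := Real.sq_sqrt (by norm_num)
  have h2nn : (0 : ℝ) ≤ Real.sqrt 2 := Real.sqrt_nonneg 2
  have hr2a : (1.41421356 : ℝ) ≤ Real.sqrt 2 := aux_sqrt2_lb
  have hr2b : Real.sqrt 2 ≤ 1.41421357 := aux_sqrt2_ub
  have hs_nonneg := aux_sin8_nonneg
  have hc_pos := aux_cos8_pos
  have hs2 := aux_sin8_sq
  have hc2 := aux_cos8_sq
  have hsc := aux_sin8_eq
  have hc_lb := aux_cos8_lb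
  have hc_ub := aux_cos8_ub
  have hs_ub := aux_sin8_ub
  have hs_lb := aux_sin8_lb
  have hx1a := aux_x1_nonneg
  have hx1b := aux_x1_ub
  -- s and c
  set s : ℝ := Real.sin (π / 8) with hsdef
  set c : ℝ := Real.cos (π / 8) with hcdef
  have hc_ne : c ≠ 0 := ne_of_gt hc_pos
  clear_value s c
  -- the comparison function and its antiderivative
  set z : ℝ → ℝ := fun θ => s - c * (π / 8 - θ) with hzdef
  set g : ℝ → ℝ := fun θ =>
    z θ ^ (2 * m + 2) - (M + 1) * s * (π / 8 - θ) ^ 2 * z θ ^ (2 * m + 1) with hgdef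
  set F : ℝ → ℝ := fun θ =>
    (1 / c) * (z θ ^ (2 * m + 3) / (2 * M + 3)
      - ((M + 1) * s / c ^ 2) * (s ^ 2 * z θ ^ (2 * m + 2) / (2 * M + 2)
          - 2 * s * z θ ^ (2 * m + 3) / (2 * M + 3)
          + z θ ^ (2 * m + 4) / (2 * M + 4))) with hFdef
  clear_value z g F
  have hd2 : (2 * M + 2) ≠ 0 := by intro h; linarith [hM]
  have hd3 : (2 * M + 3) ≠ 0 := by intro h; linarith [hM]
  have hd4 : (2 * M + 4) ≠ 0 := by intro h; linarith [hM]
  -- derivative of F is g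
  have hderiv : ∀ θ : ℝ, HasDerivAt F (g θ) θ := by
    intro θ
    have hz : HasDerivAt z c θ := by
      rw [hzdef]
      have h0 : HasDerivAt (fun θ : ℝ => s - c * (π / 8 - θ)) (0 - c * (0 - 1)) θ :=
        (hasDerivAt_const θ s).sub
          (((hasDerivAt_const θ (π / 8)).sub (hasDerivAt_id θ)).const_mul c)
      simpa using h0
    have e1 : 2 * m + 3 - 1 = 2 * m + 2 := by omega
    have e2 : 2 * m + 2 - 1 = 2 * m + 1 := by omega
    have e3 : 2 * m + 4 - 1 = 2 * m + 3 := by omega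
    have h1 := (hz.pow (2 * m + 3)).div_const (2 * M + 3)
    have h2' := ((hz.pow (2 * m + 2)).const_mul (s ^ 2)).div_const (2 * M + 2)
    have h3 := ((hz.pow (2 * m + 3)).const_mul (2 * s)).div_const (2 * M + 3)
    have h4 := (hz.pow (2 * m + 4)).div_const (2 * M + 4)
    have h5 := ((h2'.sub h3).add h4).const_mul ((M + 1) * s / c ^ 2)
    have h6 := (h1.sub h5).const_mul (1 / c)
    rw [e1, e2, e3] at h6
    refine HasDerivAt.congr_deriv (f := F) (by rw [hFdef]; exact h6) ?_
    symm
    have hw : s - z θ = c * (π / 8 - θ) := by simp [hzdef]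
    have hu : π / 8 - θ = (s - z θ) / c := by rw [hw]; field_simp
    simp only [hgdef]
    rw [hu]
    push_cast
    rw [← hMdef]
    field_simp
    ring
  -- integral of g
  have hgcont : Continuous g := by
    simp only [hgdef, hzdef]
    fun_prop
  have hInt : ∫ θ in (0:ℝ)..(π / 8), g θ = F (π / 8) - F 0 :=
    intervalIntegral.integral_eq_sub_of_hasDerivAt (fun θ _ => hderiv θ)
      (hgcont.intervalIntegrable _ _)
  -- pointwise bound : g θ ≤ sin θ ^ (2m+2) on [0, π/8]
  have hpoint : ∀ θ ∈ Set.Icc (0:ℝ) (π / 8), g θ ≤ Real.sin θ ^ (2 * m + 2) := by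
    intro θ hθ
    obtain ⟨hθ0, hθ1⟩ := hθ
    set u : ℝ := π / 8 - θ with hudef
    clear_value u
    have hu0 : 0 ≤ u := by simp only [hudef]; linarith
    have hu1 : u ≤ π / 8 := by simp only [hudef]; linarith
    have hzθ : z θ = s - c * u := by simp only [hzdef]; rw [hudef]
    have hz0 : 0 ≤ z θ := by
      rw [hzθ]
      have hcu : c * u ≤ c * (π / 8) := mul_le_mul_of_nonneg_left hu1 hc_pos.le
      linarith [hx1a]
    have hsin0 : 0 ≤ Real.sin θ := by
      apply Real.sin_nonneg_of_nonneg_of_le_pi hθ0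
      linarith
    have hy0 : 0 ≤ s * u ^ 2 / 2 := by positivity
    have hcosu : 1 - u ^ 2 / 2 ≤ Real.cos u := Real.one_sub_sq_div_two_le_cos
    have hsinu : Real.sin u ≤ u := Real.sin_le hu0
    have hlow : z θ - s * u ^ 2 / 2 ≤ Real.sin θ := by
      have hsineq : Real.sin θ = s * Real.cos u - c * Real.sin u := by
        have hθeq : θ = π / 8 - u := by rw [hudef]; ring
        rw [hθeq, Real.sin_sub, ← hsdef, ← hcdef]
      rw [hzθ, hsineq]
      have e1 : s * (1 - u ^ 2 / 2) ≤ s * Real.cos u := mul_le_mul_of_nonneg_left hcosu hs_nonneg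
      have e2 : c * Real.sin u ≤ c * u := mul_le_mul_of_nonneg_left hsinu hc_pos.le
      linarith [e1, e2]
    have hkey := aux_even_pow_lower m (Real.sin θ) (z θ) (s * u ^ 2 / 2) hsin0 hz0 hy0 hlow
    have : g θ = z θ ^ (2 * m + 2) - (2 * M + 2) * z θ ^ (2 * m + 1) * (s * u ^ 2 / 2) := by
      simp only [hgdef, hudef]
      ring
    rw [this]
    simpa [hMdef] using hkey
  -- integral comparison
  have hsin_cont : Continuous (fun θ : ℝ => Real.sin θ ^ (2 * m + 2)) := by fun_prop
  have hBge : F (π / 8) - F 0 ≤ ∫ θ in (0:ℝ)..(π / 8), Real.sin θ ^ (2 * m + 2) := by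
    rw [← hInt]
    apply intervalIntegral.integral_mono_on (by positivity)
      (hgcont.intervalIntegrable _ _) (hsin_cont.intervalIntegrable _ _) hpoint
  -- value of F at π/8
  have hz8 : z (π / 8) = s := by simp [hzdef]
  have hF8 : F (π / 8) = (Real.sqrt 2 - 1) * ((2 - Real.sqrt 2) / 4) ^ (m + 1)
      * ((2 * M + 1 + 2 * Real.sqrt 2) / ((2 * M + 3) * (2 * M + 4))) := by
    have hstep : F (π / 8) = (s / c) * (s ^ 2) ^ (m + 1)
        * (((2 * M + 4) - s ^ 2 / c ^ 2) / ((2 * M + 3) * (2 * M + 4))) := by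
      simp only [hFdef, hz8]
      field_simp
      ring
    rw [hstep]
    have hsc' : s / c = Real.sqrt 2 - 1 := by
      rw [hsc, mul_div_assoc, div_self hc_ne, mul_one]
    have hratio : s ^ 2 / c ^ 2 = 3 - 2 * Real.sqrt 2 := by
      have hne : c ^ 2 ≠ 0 := pow_ne_zero _ hc_ne
      rw [div_eq_iff hne, hs2, hc2]
      linear_combination (1/2 : ℝ) * h2
    rw [hsc', hratio, hs2]
    ring
  -- lower bound for 8^(m+2) * F(π/8)
  have hFpos_bound : (0.6595 : ℝ) ≤ 8 ^ (m + 2) * F (π / 8) := by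
    have hden : (0:ℝ) < (2 * M + 3) * (2 * M + 4) := by nlinarith [hM]
    have hpow8 : (8 : ℝ) ^ (m + 2) * F (π / 8)
        = 8 * (8 ^ (m + 1) * ((2 - Real.sqrt 2) / 4) ^ (m + 1))
            * ((Real.sqrt 2 - 1) * (2 * M + 1 + 2 * Real.sqrt 2))
            / ((2 * M + 3) * (2 * M + 4)) := by
      rw [hF8]
      field_simp
      ring
    rw [hpow8, le_div_iff₀ hden]
    exact aux_main_lower m M hm hMdef
  -- upper bound for 8^(m+2) * F 0
  have hz0v : z 0 = s - c * (π / 8) := by simp [hzdef]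
  have hF0_bound : 8 ^ (m + 2) * F 0 ≤ (0.001 : ℝ) := by
    set x₁ : ℝ := s - c * (π / 8) with hx1def
    have hF0 : F 0 = (1 / c) * (x₁ ^ (2 * m + 3) / (2 * M + 3)
      - ((M + 1) * s / c ^ 2) * (s ^ 2 * x₁ ^ (2 * m + 2) / (2 * M + 2)
          - 2 * s * x₁ ^ (2 * m + 3) / (2 * M + 3)
          + x₁ ^ (2 * m + 4) / (2 * M + 4))) := by
      simp only [hFdef, hz0v, hx1def]
    have hco : 0 ≤ (M + 1) * s / c ^ 2 := by positivity
    have ht2 : 0 ≤ s ^ 2 * x₁ ^ (2 * m + 2) / (2 * M + 2) := by positivity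
    have ht4 : 0 ≤ x₁ ^ (2 * m + 4) / (2 * M + 4) := by positivity
    have hF0le : F 0 ≤ (1 / c) * (x₁ ^ (2 * m + 3) / (2 * M + 3)
        + ((M + 1) * s / c ^ 2) * (2 * s * x₁ ^ (2 * m + 3) / (2 * M + 3))) := by
      rw [hF0]
      have hstep : x₁ ^ (2 * m + 3) / (2 * M + 3)
          - ((M + 1) * s / c ^ 2) * (s ^ 2 * x₁ ^ (2 * m + 2) / (2 * M + 2)
              - 2 * s * x₁ ^ (2 * m + 3) / (2 * M + 3)
              + x₁ ^ (2 * m + 4) / (2 * M + 4))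
          ≤ x₁ ^ (2 * m + 3) / (2 * M + 3)
            + ((M + 1) * s / c ^ 2) * (2 * s * x₁ ^ (2 * m + 3) / (2 * M + 3)) :=
        aux_drop _ _ _ _ _ (mul_nonneg hco ht2) (mul_nonneg hco ht4)
      have h1c : 0 ≤ 1 / c := by positivity
      exact mul_le_mul_of_nonneg_left hstep h1c
    -- now bound the RHS
    have hx1p : x₁ ^ (2 * m + 3) ≤ (0.02 : ℝ) ^ (2 * m + 3) :=
      pow_le_pow_left₀ hx1a hx1b _
    have hx1pn : 0 ≤ x₁ ^ (2 * m + 3) := pow_nonneg hx1a _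
    have hs2ub : s ^ 2 ≤ (0.147 : ℝ) := by rw [hsdef]; exact aux_sin8_sq_ub
    have hcoef : (1 / c) * (1 / (2 * M + 3)
        + ((M + 1) * s / c ^ 2) * (2 * s / (2 * M + 3))) ≤ (1.5 : ℝ) :=
      aux_coef M s c hM hs_nonneg hs2ub hc_lb hc_ub hc_pos
    have hF0le2 : F 0 ≤ (0.02 : ℝ) ^ (2 * m + 3) * 1.5 := by
      have e : (1 / c) * (x₁ ^ (2 * m + 3) / (2 * M + 3)
          + ((M + 1) * s / c ^ 2) * (2 * s * x₁ ^ (2 * m + 3) / (2 * M + 3)))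
          = x₁ ^ (2 * m + 3) * ((1 / c) * (1 / (2 * M + 3)
            + ((M + 1) * s / c ^ 2) * (2 * s / (2 * M + 3)))) := by
        field_simp
      rw [e] at hF0le
      calc F 0 ≤ x₁ ^ (2 * m + 3) * ((1 / c) * (1 / (2 * M + 3)
            + ((M + 1) * s / c ^ 2) * (2 * s / (2 * M + 3)))) := hF0le
        _ ≤ (0.02 : ℝ) ^ (2 * m + 3) * 1.5 := by
            apply mul_le_mul hx1p hcoef _ (by positivity)
            positivity
    have hpow02 : (8 : ℝ) ^ (m + 2) * ((0.02 : ℝ) ^ (2 * m + 3) * 1.5)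
        ≤ 0.001 := by
      have e1 : (8 : ℝ) ^ (m + 2) * ((0.02 : ℝ) ^ (2 * m + 3) * 1.5)
          = 0.000768 * ((0.0032 : ℝ) ^ m) := by
        have e2 : (0.0032 : ℝ) ^ m = 8 ^ m * (0.0004 : ℝ) ^ m := by
          rw [← mul_pow]
          norm_num
        have e3 : (0.02 : ℝ) ^ (2 * m + 3) = (0.0004 : ℝ) ^ m * (0.02 : ℝ) ^ 3 := by
          rw [show (0.0004 : ℝ) = 0.02 ^ 2 by norm_num, ← pow_mul, ← pow_add]
        rw [e2, e3, pow_add]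
        ring
      rw [e1]
      have h1 : (0.0032 : ℝ) ^ m ≤ 1 := pow_le_one₀ (by norm_num) (by norm_num)
      calc (0.000768 : ℝ) * (0.0032 : ℝ) ^ m ≤ 0.000768 * 1 :=
            mul_le_mul_of_nonneg_left h1 (by norm_num)
        _ ≤ 0.001 := by norm_num
    calc (8:ℝ) ^ (m + 2) * F 0 ≤ (8:ℝ) ^ (m+2) * ((0.02 : ℝ) ^ (2 * m + 3) * 1.5) := by
          apply mul_le_mul_of_nonneg_left hF0le2 (by positivity)
      _ ≤ 0.001 := hpow02
  -- combine : 8^(m+2) * (F (π/8) - F 0) ≥ 0.6585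
  have hcomb : (0.6585 : ℝ) ≤ 8 ^ (m + 2) * (F (π / 8) - F 0) := by
    have e : (8:ℝ) ^ (m + 2) * (F (π / 8) - F 0)
        = 8 ^ (m + 2) * F (π / 8) - 8 ^ (m + 2) * F 0 := by ring
    rw [e]
    linarith
  -- positivity of B
  have h8pos : (0:ℝ) < 8 ^ (m + 2) := by positivity
  have hFd_pos : 0 < F (π / 8) - F 0 := by
    by_contra hcon
    push_neg at hcon
    have h0 := mul_le_mul_of_nonneg_left hcon (le_of_lt h8pos)
    rw [mul_zero] at h0
    linarith
  have hBpos : 0 < ∫ θ in (0:ℝ)..(π / 8), Real.sin θ ^ (2 * (m + 1)) := by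
    have e : 2 * (m + 1) = 2 * m + 2 := by omega
    rw [e]
    linarith
  -- A bound
  have hA : (∫ θ in (0:ℝ)..π, Real.sin θ ^ (2 * (m + 1))) ≤ π * (429 / 2048) := by
    rw [integral_sin_pow_even]
    have hsplit : (∏ i ∈ Finset.range (m + 1), (2 * (i:ℝ) + 1) / (2 * i + 2))
        = (∏ i ∈ Finset.range 7, (2 * (i:ℝ) + 1) / (2 * i + 2))
          * ∏ i ∈ Finset.Ico 7 (m + 1), (2 * (i:ℝ) + 1) / (2 * i + 2) :=
      (Finset.prod_range_mul_prod_Ico _ (by omega)).symm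
    rw [hsplit]
    have h7 : (∏ i ∈ Finset.range 7, (2 * (i:ℝ) + 1) / (2 * i + 2)) = 429 / 2048 := by
      norm_num [Finset.prod_range_succ]
    have hle1 : (∏ i ∈ Finset.Ico 7 (m + 1), (2 * (i:ℝ) + 1) / (2 * i + 2)) ≤ 1 :=
      Finset.prod_le_one (fun i _ => by positivity)
        (fun i _ => by
          rw [div_le_one (by positivity)]
          linarith)
    have hge0 : 0 ≤ ∏ i ∈ Finset.Ico 7 (m + 1), (2 * (i:ℝ) + 1) / (2 * i + 2) :=
      Finset.prod_nonneg (fun i _ => by positivity)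
    rw [h7]
    have h1 : (429 / 2048 : ℝ) * (∏ i ∈ Finset.Ico 7 (m + 1), (2 * (i:ℝ) + 1) / (2 * i + 2))
        ≤ 429 / 2048 * 1 := mul_le_mul_of_nonneg_left hle1 (by norm_num)
    have h2 := mul_le_mul_of_nonneg_left (h1.trans_eq (mul_one _)) pi_pos.le
    linarith
  -- final assembly
  rw [div_le_iff₀ hBpos]
  have e8 : (8:ℝ) ^ (m + 1 + 1) = 8 ^ (m + 2) := by norm_num
  rw [e8]
  have hBge' : F (π / 8) - F 0 ≤ ∫ θ in (0:ℝ)..(π / 8), Real.sin θ ^ (2 * (m + 1)) := by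
    have e : 2 * (m + 1) = 2 * m + 2 := by omega
    rw [e]
    exact hBge
  calc (∫ θ in (0:ℝ)..π, Real.sin θ ^ (2 * (m + 1)))
      ≤ π * (429 / 2048) := hA
    _ ≤ 3.141593 * (429 / 2048) :=
        mul_le_mul_of_nonneg_right (le_of_lt pi_ub) (by norm_num)
    _ ≤ 0.6585 := by norm_num
    _ ≤ 8 ^ (m + 2) * (F (π / 8) - F 0) := hcomb
    _ ≤ 8 ^ (m + 2) * ∫ θ in (0:ℝ)..(π / 8), Real.sin θ ^ (2 * (m + 1)) := by
        apply mul_le_mul_of_nonneg_left hBge' (by positivity)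
end

section
/- For every positive integer k, ∫₀^{π/8} sin^{2k}θ dθ ≥ (1/(2k+1)) · (√2/4) · ((2−√2)/4)^k · (1 + ((2−√2)/4)·(2k+2)/(2k+3) + ((2−√2)/4)²·((2k+2)(2k+4))/((2k+3)(2k+5))). -/
open Real intervalIntegral

/-- For every positive integer `k`,
`∫₀^{π/8} sin^{2k}θ dθ ≥ (1/(2k+1))·(√2/4)·((2−√2)/4)^k ·
(1 + ((2−√2)/4)·(2k+2)/(2k+3) + ((2−√2)/4)²·((2k+2)(2k+4))/((2k+3)(2k+5)))`. -/
theorem sin_integral_lower_bound_refined (k : ℕ) (hk : 1 ≤ k) :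
    (1 / (2 * (k : ℝ) + 1)) * (Real.sqrt 2 / 4) * ((2 - Real.sqrt 2) / 4) ^ k *
        (1 + ((2 - Real.sqrt 2) / 4) * ((2 * (k : ℝ) + 2) / (2 * (k : ℝ) + 3)) +
          ((2 - Real.sqrt 2) / 4) ^ 2 *
            ((2 * (k : ℝ) + 2) * (2 * (k : ℝ) + 4) /
              ((2 * (k : ℝ) + 3) * (2 * (k : ℝ) + 5)))) ≤
      ∫ θ in (0:ℝ)..(Real.pi / 8), Real.sin θ ^ (2 * k) := by
  set r : ℝ := (2 - Real.sqrt 2) / 4 with hr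
  set s := Real.sin (Real.pi / 8) with hs
  set c := Real.cos (Real.pi / 8) with hc
  have h2 : (0:ℝ) ≤ 2 := by norm_num
  have hsq2 : Real.sqrt 2 ^ 2 = 2 := Real.sq_sqrt h2
  have hsq2le : Real.sqrt 2 ≤ 2 := by nlinarith [Real.sqrt_nonneg 2]
  have hs2 : s ^ 2 = r := by
    rw [hs, hr, Real.sin_pi_div_eight, div_pow, Real.sq_sqrt (by linarith)]
    norm_num
  have hsc : s * c = Real.sqrt 2 / 4 := by
    rw [hs, hc, Real.sin_pi_div_eight, Real.cos_pi_div_eight]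
    rw [div_mul_div_comm, ← Real.sqrt_mul (by linarith)]
    have : (2 - Real.sqrt 2) * (2 + Real.sqrt 2) = 2 := by nlinarith
    rw [this]; norm_num
  set A : ℝ := Real.sqrt 2 / 4 * r ^ k with hA
  have hp1 : s ^ (2 * k + 1) * c = A := by
    rw [hA, pow_succ, pow_mul, hs2, mul_assoc, hsc]; ring
  have hp3 : s ^ (2 * k + 2 + 1) * c = A * r := by
    have h1 : s ^ (2 * k + 2 + 1) * c = s ^ (2 * k + 1) * c * s ^ 2 := by ring
    rw [h1, hs2, hp1]
  have hp5 : s ^ (2 * k + 4 + 1) * c = A * r ^ 2 := by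
    have h1 : s ^ (2 * k + 4 + 1) * c = s ^ (2 * k + 1) * c * (s ^ 2) ^ 2 := by ring
    rw [h1, hs2, hp1]
  set I0 := ∫ θ in (0:ℝ)..(Real.pi / 8), Real.sin θ ^ (2 * k) with hI0
  set I2 := ∫ θ in (0:ℝ)..(Real.pi / 8), Real.sin θ ^ (2 * k + 2) with hI2
  set I4 := ∫ θ in (0:ℝ)..(Real.pi / 8), Real.sin θ ^ (2 * k + 4) with hI4
  set I6 := ∫ θ in (0:ℝ)..(Real.pi / 8), Real.sin θ ^ (2 * k + 6) with hI6
  have hzero : ∀ m : ℕ, Real.sin 0 ^ (m + 1) * Real.cos 0 = 0 := by intro m; simp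
  have e1 := integral_sin_pow (a := 0) (b := Real.pi / 8) (2 * k)
  have e2 := integral_sin_pow (a := 0) (b := Real.pi / 8) (2 * k + 2)
  have e3 := integral_sin_pow (a := 0) (b := Real.pi / 8) (2 * k + 4)
  rw [hzero] at e1 e2 e3
  rw [show 2 * k + 2 + 2 = 2 * k + 4 from by ring] at e2
  rw [show 2 * k + 4 + 2 = 2 * k + 6 from by ring] at e3
  rw [← hs, ← hc, ← hI0, ← hI2, hp1] at e1
  rw [← hs, ← hc, ← hI2, ← hI4, hp3] at e2
  rw [← hs, ← hc, ← hI4, ← hI6, hp5] at e3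
  push_cast at e1 e2 e3
  have hI6nn : 0 ≤ I6 := by
    rw [hI6]
    apply intervalIntegral.integral_nonneg (by positivity : (0:ℝ) ≤ Real.pi / 8)
    intro x _
    exact (even_two_mul k |>.add (by decide : Even 6)).pow_nonneg _
  have hK : (0:ℝ) ≤ (k:ℝ) := Nat.cast_nonneg k
  have d1 : (0:ℝ) < 2 * (k:ℝ) + 1 := by linarith
  have d2 : ((2:ℝ) * (k:ℝ) + 2) ≠ 0 := by positivity
  have d3 : (0:ℝ) < 2 * (k:ℝ) + 3 := by linarith
  have d4 : ((2:ℝ) * (k:ℝ) + 4) ≠ 0 := by positivity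
  have d5 : (0:ℝ) < 2 * (k:ℝ) + 5 := by linarith
  have d6 : ((2:ℝ) * (k:ℝ) + 6) ≠ 0 := by positivity
  have E1 : (2 * (k:ℝ) + 2) * I2 = (2 * (k:ℝ) + 1) * I0 - A := by
    rw [e1]; field_simp; ring
  have E2 : (2 * (k:ℝ) + 4) * I4 = (2 * (k:ℝ) + 3) * I2 - A * r := by
    rw [e2]; field_simp; ring
  have E3 : (2 * (k:ℝ) + 6) * I6 = (2 * (k:ℝ) + 5) * I4 - A * r ^ 2 := by
    rw [e3]; field_simp; ring
  have hAnn : 0 ≤ A := by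
    rw [hA]
    exact mul_nonneg (by positivity) (pow_nonneg (by rw [hr]; nlinarith [Real.sqrt_nonneg 2]) k)
  set K : ℝ := (k:ℝ) with hKd
  have key : I0 * ((2 * K + 1) * (2 * K + 3) * (2 * K + 5)) =
      (2 * K + 3) * (2 * K + 5) * A + (2 * K + 2) * (2 * K + 5) * (A * r)
        + (2 * K + 2) * (2 * K + 4) * (A * r ^ 2)
        + (2 * K + 2) * (2 * K + 4) * (2 * K + 6) * I6 := by
    linear_combination (-((2 * K + 3) * (2 * K + 5))) * E1
      + (-((2 * K + 2) * (2 * K + 5))) * E2 + (-((2 * K + 2) * (2 * K + 4))) * E3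
  have hD : (0:ℝ) < (2 * K + 1) * (2 * K + 3) * (2 * K + 5) := by positivity
  rw [← mul_le_mul_iff_of_pos_right hD]
  have htarget : (1 / (2 * K + 1)) * (Real.sqrt 2 / 4) * r ^ k *
        (1 + r * ((2 * K + 2) / (2 * K + 3)) +
          r ^ 2 * ((2 * K + 2) * (2 * K + 4) / ((2 * K + 3) * (2 * K + 5))))
        * ((2 * K + 1) * (2 * K + 3) * (2 * K + 5)) =
      (2 * K + 3) * (2 * K + 5) * A + (2 * K + 2) * (2 * K + 5) * (A * r)
        + (2 * K + 2) * (2 * K + 4) * (A * r ^ 2) := by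
    rw [hA]
    field_simp
  rw [htarget, key]
  have : 0 ≤ (2 * K + 2) * (2 * K + 4) * (2 * K + 6) * I6 := by
    have h1 : (0:ℝ) < (2 * K + 2) * (2 * K + 4) * (2 * K + 6) := by positivity
    exact mul_nonneg h1.le hI6nn
  linarith
end

section
/- For 0 ≤ r₁ < r₂ ≤ k and ρ ∈ (0,1), (log(1+r₂²) − log(1+r₁²))/(arctan r₂ − arctan r₁)^ρ ≤ max(log(1+k²), 2k); consequently this supremum is at most 2k for k ≥ 1. -/
open Real

lemma aux_mono (k : ℝ) (hk : 0 ≤ k) :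
    MonotoneOn (fun x : ℝ => 2 * k * Real.arctan x - Real.log (1 + x ^ 2))
      (Set.Icc 0 k) := by
  have hderiv : ∀ x : ℝ, HasDerivAt (fun x : ℝ => 2 * k * Real.arctan x - Real.log (1 + x ^ 2))
      (2 * k * (1 / (1 + x ^ 2)) - 2 * x / (1 + x ^ 2)) x := by
    intro x
    have h1 : (0:ℝ) < 1 + x ^ 2 := by positivity
    have ha : HasDerivAt (fun x : ℝ => 2 * k * Real.arctan x) (2 * k * (1 / (1 + x ^ 2))) x :=
      (Real.hasDerivAt_arctan x).const_mul (2 * k)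
    have hb : HasDerivAt (fun x : ℝ => 1 + x ^ 2) (2 * x) x := by
      have := ((hasDerivAt_pow 2 x).const_add 1)
      simpa using this
    have hl : HasDerivAt (fun x : ℝ => Real.log (1 + x ^ 2)) (2 * x / (1 + x ^ 2)) x :=
      hb.log h1.ne'
    exact ha.sub hl
  apply monotoneOn_of_deriv_nonneg (convex_Icc 0 k)
  · exact ((continuous_const.mul Real.continuous_arctan).sub
      (Real.continuousOn_log.comp_continuous (by continuity)
        (fun x => Set.mem_compl_singleton_iff.mpr (by positivity : ((1:ℝ)+x^2) ≠ 0)))).continuousOn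
  · intro x _
    exact (hderiv x).differentiableAt.differentiableWithinAt
  · intro x hx
    rw [interior_Icc] at hx
    rw [(hderiv x).deriv]
    have h1 : (0:ℝ) < 1 + x ^ 2 := by positivity
    have : 2 * k * (1 / (1 + x ^ 2)) - 2 * x / (1 + x ^ 2) = 2 * (k - x) / (1 + x ^ 2) := by
      field_simp
    rw [this]
    have : 0 ≤ k - x := by linarith [hx.2]
    positivity

/-- For `0 ≤ r₁ < r₂ ≤ k` (with `k ≥ 1`) and `ρ ∈ (0,1)`,
`(log(1+r₂²) − log(1+r₁²))/(arctan r₂ − arctan r₁)^ρ ≤ max(log(1+k²), 2k)`;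
consequently this quantity is at most `2k`. -/
theorem log_quotient_le_max (k : ℕ) (hk : 1 ≤ k) (ρ : ℝ) (hρ : 0 < ρ) (hρ1 : ρ < 1)
    (r₁ r₂ : ℝ) (h₁ : 0 ≤ r₁) (h₁₂ : r₁ < r₂) (h₂ : r₂ ≤ k) :
    (Real.log (1 + r₂ ^ 2) - Real.log (1 + r₁ ^ 2)) /
        (Real.arctan r₂ - Real.arctan r₁) ^ ρ ≤
      max (Real.log (1 + (k : ℝ) ^ 2)) (2 * (k : ℝ)) ∧
    (Real.log (1 + r₂ ^ 2) - Real.log (1 + r₁ ^ 2)) /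
        (Real.arctan r₂ - Real.arctan r₁) ^ ρ ≤ 2 * (k : ℝ) := by
  have hk1 : (1:ℝ) ≤ (k:ℝ) := by exact_mod_cast hk
  have hkpos : (0:ℝ) < (k:ℝ) := by linarith
  set D := Real.arctan r₂ - Real.arctan r₁ with hDdef
  have hD : 0 < D := sub_pos.mpr (Real.arctan_strictMono h₁₂)
  have hDρ : 0 < D ^ ρ := Real.rpow_pos_of_pos hD ρ
  set N := Real.log (1 + r₂ ^ 2) - Real.log (1 + r₁ ^ 2) with hNdef
  -- key: N ≤ 2k * D
  have hkey : N ≤ 2 * (k:ℝ) * D := by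
    have h1 : r₁ ∈ Set.Icc (0:ℝ) (k:ℝ) := ⟨h₁, by linarith⟩
    have h2 : r₂ ∈ Set.Icc (0:ℝ) (k:ℝ) := ⟨by linarith, h₂⟩
    have := aux_mono (k:ℝ) hkpos.le h1 h2 h₁₂.le
    simp only at this
    simp only [hNdef, hDdef]
    linarith
  -- N ≤ log(1+k²) ≤ 2k
  have hNk : N ≤ Real.log (1 + (k:ℝ) ^ 2) := by
    have hlog1 : 0 ≤ Real.log (1 + r₁ ^ 2) :=
      Real.log_nonneg (by nlinarith)
    have hlog2 : Real.log (1 + r₂ ^ 2) ≤ Real.log (1 + (k:ℝ) ^ 2) := by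
      apply Real.log_le_log (by positivity)
      nlinarith
    simp only [hNdef]; linarith
  have hlogk : Real.log (1 + (k:ℝ) ^ 2) ≤ 2 * (k:ℝ) := by
    have h1 : Real.log (1 + (k:ℝ) ^ 2) ≤ Real.log ((1 + (k:ℝ)) ^ 2) := by
      apply Real.log_le_log (by positivity)
      nlinarith
    have h2 : Real.log ((1 + (k:ℝ)) ^ 2) = 2 * Real.log (1 + (k:ℝ)) := by
      rw [Real.log_pow]; push_cast; ring
    have h3 : Real.log (1 + (k:ℝ)) ≤ (k:ℝ) := by
      have := Real.log_le_sub_one_of_pos (show (0:ℝ) < 1 + (k:ℝ) by linarith)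
      linarith
    linarith
  -- main bound: N ≤ 2k * D^ρ
  have hmain : N ≤ 2 * (k:ℝ) * D ^ ρ := by
    rcases le_or_gt D 1 with hD1 | hD1
    · have : D ≤ D ^ ρ := by
        calc D = D ^ (1:ℝ) := (Real.rpow_one D).symm
        _ ≤ D ^ ρ := Real.rpow_le_rpow_of_exponent_ge hD hD1 hρ1.le
      nlinarith
    · have : (1:ℝ) ≤ D ^ ρ := Real.one_le_rpow hD1.le hρ.le
      nlinarith
  have h2k : N / D ^ ρ ≤ 2 * (k:ℝ) := by
    rw [div_le_iff₀ hDρ]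
    calc N ≤ 2 * (k:ℝ) * D ^ ρ := hmain
    _ = 2 * (k:ℝ) * D ^ ρ := rfl
  exact ⟨h2k.trans (le_max_right _ _), h2k⟩
end
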